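/- The operators E and F on V = ℂ^{n+1} satisfy the (r,s)-Serre relation E³F − (rs)^{−1}[3] E²FE + (rs)^{−1}[3] EFE² − FE³ = 0, where [3] = r² + rs + s². (This is the relation (ad_l e₁)³(e₀) = 0 evaluated on the evaluation representation of U_{r,s}(ŝl₂).) -/

import Mathlib

/-- The two-parameter quantum integer `[m] = (r^m - s^m)/(r - s)`. -/
noncomputable def qint (r s : ℂ) (m : ℕ) : ℂ := (r ^ m - s ^ m) / (r - s)

/-- The operator `E` on `V = ℂ^{n+1}`, `E v_i = [n+1-i] v_{i-1}` (with `v_{-1} = 0`). -/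
noncomputable def Emat (n : ℕ) (r s : ℂ) : Matrix (Fin (n + 1)) (Fin (n + 1)) ℂ :=
  Matrix.of fun j i => if (j : ℕ) + 1 = (i : ℕ) then qint r s (n + 1 - (i : ℕ)) else 0

/-- The operator `F` on `V = ℂ^{n+1}`, `F v_i = [i+1] v_{i+1}` (with `v_{n+1} = 0`). -/
noncomputable def Fmat (n : ℕ) (r s : ℂ) : Matrix (Fin (n + 1)) (Fin (n + 1)) ℂ :=
  Matrix.of fun j i => if (j : ℕ) = (i : ℕ) + 1 then qint r s ((i : ℕ) + 1) else 0

lemma Emat_mul (n : ℕ) (r s : ℂ) (M : Matrix (Fin (n+1)) (Fin (n+1)) ℂ)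
    (j i : Fin (n+1)) :
    (Emat n r s * M) j i =
      if h : (j : ℕ) < n then qint r s (n - (j : ℕ)) * M ⟨(j : ℕ) + 1, by omega⟩ i
      else 0 := by
  rw [Matrix.mul_apply]
  split_ifs with h
  · rw [Finset.sum_eq_single (⟨(j : ℕ) + 1, by omega⟩ : Fin (n+1))]
    · have e : n + 1 - ((j : ℕ) + 1) = n - (j : ℕ) := by omega
      simp [Emat, e]
    · intro k _ hk
      have hv : (j : ℕ) + 1 ≠ (k : ℕ) := by
        intro hc; exact hk (Fin.ext (by simp [← hc]))
      simp [Emat, hv]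
    · simp
  · apply Finset.sum_eq_zero
    intro k _
    have hv : (j : ℕ) + 1 ≠ (k : ℕ) := by omega
    simp [Emat, hv]

lemma Fmat_mul (n : ℕ) (r s : ℂ) (M : Matrix (Fin (n+1)) (Fin (n+1)) ℂ)
    (j i : Fin (n+1)) :
    (Fmat n r s * M) j i =
      if h : 0 < (j : ℕ) then qint r s (j : ℕ) * M ⟨(j : ℕ) - 1, by omega⟩ i
      else 0 := by
  rw [Matrix.mul_apply]
  split_ifs with h
  · rw [Finset.sum_eq_single (⟨(j : ℕ) - 1, by omega⟩ : Fin (n+1))]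
    · have e : (j : ℕ) - 1 + 1 = (j : ℕ) := by omega
      simp [Fmat, e]
    · intro k _ hk
      have hv : (j : ℕ) ≠ (k : ℕ) + 1 := by
        intro hc; exact hk (Fin.ext (by simp; omega))
      simp [Fmat, hv]
    · simp
  · apply Finset.sum_eq_zero
    intro k _
    have hv : (j : ℕ) ≠ (k : ℕ) + 1 := by omega
    simp [Fmat, hv]

lemma qint_zero (r s : ℂ) : qint r s 0 = 0 := by simp [qint]

lemma P1 (n : ℕ) (r s : ℂ) (j i : Fin (n+1)) :
    (Emat n r s * (Emat n r s * (Emat n r s * Fmat n r s))) j i =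
      if (j : ℕ) + 2 = (i : ℕ) then
        qint r s (n - (j : ℕ)) * qint r s (n - (j : ℕ) - 1) * qint r s (n - (j : ℕ) - 2) *
          qint r s ((j : ℕ) + 3)
      else 0 := by
  simp only [Emat_mul, Fmat, Matrix.of_apply, Fin.val_mk]
  split_ifs <;>
    first
      | (rename_i h1 h2 h3 h4 h5
         have a1 : n - ((j:ℕ)+1) = n - (j:ℕ) - 1 := by omega
         have a2 : n - ((j:ℕ)+1+1) = n - (j:ℕ) - 2 := by omega
         have e : (i : ℕ) + 1 = (j : ℕ) + 3 := by omega
         rw [a1, a2, e]; ring1)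
      | omega
      | (rename_i h
         have e : n - (j : ℕ) - 2 = 0 := by omega
         rw [e, qint_zero]; ring1)
      | simp

lemma P2 (n : ℕ) (r s : ℂ) (j i : Fin (n+1)) :
    (Emat n r s * (Emat n r s * (Fmat n r s * Emat n r s))) j i =
      if (j : ℕ) + 2 = (i : ℕ) then
        qint r s (n - (j : ℕ)) * qint r s (n - (j : ℕ) - 1) * qint r s ((j : ℕ) + 2) *
          qint r s (n - (j : ℕ) - 1)
      else 0 := by
  simp only [Emat_mul, Fmat_mul]
  simp only [Emat, Fmat, Matrix.of_apply, Fin.val_mk]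
  split_ifs <;>
    first
      | omega
      | (have a1 : n - ((j:ℕ)+1) = n - (j:ℕ) - 1 := by omega
         have e : n + 1 - (i : ℕ) = n - (j : ℕ) - 1 := by omega
         have e2 : (j:ℕ) + 1 + 1 = (j:ℕ) + 2 := by omega
         rw [a1, e, e2]; ring1)
      | simp

lemma P3 (n : ℕ) (r s : ℂ) (j i : Fin (n+1)) :
    (Emat n r s * (Fmat n r s * (Emat n r s * Emat n r s))) j i =
      if (j : ℕ) + 2 = (i : ℕ) then
        qint r s (n - (j : ℕ)) * qint r s ((j : ℕ) + 1) * qint r s (n - (j : ℕ)) *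
          qint r s (n - (j : ℕ) - 1)
      else 0 := by
  simp only [Emat_mul, Fmat_mul]
  simp only [Emat, Fmat, Matrix.of_apply, Fin.val_mk]
  split_ifs <;>
    first
      | omega
      | (have a1 : (j:ℕ) + 1 - 1 = (j : ℕ) := by omega
         have e : n + 1 - (i : ℕ) = n - (j : ℕ) - 1 := by omega
         rw [a1, e]; ring1)
      | (simp_all; omega)
      | simp

lemma P4 (n : ℕ) (r s : ℂ) (j i : Fin (n+1)) :
    (Fmat n r s * (Emat n r s * (Emat n r s * Emat n r s))) j i =
      if (j : ℕ) + 2 = (i : ℕ) then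
        qint r s ((j : ℕ)) * qint r s (n + 1 - (j : ℕ)) * qint r s (n - (j : ℕ)) *
          qint r s (n - (j : ℕ) - 1)
      else 0 := by
  simp only [Emat_mul, Fmat_mul]
  simp only [Emat, Fmat, Matrix.of_apply, Fin.val_mk]
  split_ifs <;>
    first
      | omega
      | (have a1 : n - ((j:ℕ) - 1) = n + 1 - (j : ℕ) := by omega
         have a2 : n - ((j:ℕ) - 1 + 1) = n - (j : ℕ) := by omega
         have e : n + 1 - (i : ℕ) = n - (j : ℕ) - 1 := by omega
         rw [a1, a2, e]; ring1)
      | (have e : (j:ℕ) = 0 := by omega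
         rw [e, qint_zero]; ring1)
      | simp

lemma key (r s : ℂ) (hr : r ≠ 0) (hs : s ≠ 0) (hrs : r ≠ s) (m j : ℕ) :
    qint r s m * qint r s (j+3)
      - ((r * s)⁻¹ * (r ^ 2 + r * s + s ^ 2)) * (qint r s (m+1) * qint r s (j+2))
      + ((r * s)⁻¹ * (r ^ 2 + r * s + s ^ 2)) * (qint r s (m+2) * qint r s (j+1))
      - qint r s j * qint r s (m+3) = 0 := by
  have h : r - s ≠ 0 := sub_ne_zero.mpr hrs
  simp only [qint, div_mul_div_comm, mul_div_assoc']
  rw [div_sub_div_same, ← add_div, div_sub_div_same, div_eq_zero_iff]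
  left
  have hrs0 : r * s ≠ 0 := mul_ne_zero hr hs
  have hinv : (r * s)⁻¹ * (r * s) = 1 := inv_mul_cancel₀ hrs0
  have main : (r * s) * ((r ^ m - s ^ m) * (r ^ (j+3) - s ^ (j+3)))
      - (r ^ 2 + r * s + s ^ 2) * ((r ^ (m+1) - s ^ (m+1)) * (r ^ (j+2) - s ^ (j+2)))
      + (r ^ 2 + r * s + s ^ 2) * ((r ^ (m+2) - s ^ (m+2)) * (r ^ (j+1) - s ^ (j+1)))
      - (r * s) * ((r ^ j - s ^ j) * (r ^ (m+3) - s ^ (m+3))) = 0 := by ring1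
  linear_combination ((r - s)⁻¹ * (r * s)⁻¹) * main
    + ((r - s)⁻¹ * ((r ^ j - s ^ j) * (r ^ (m+3) - s ^ (m+3))
       - (r ^ m - s ^ m) * (r ^ (j+3) - s ^ (j+3)))) * hinv

/-- The `(r,s)`-Serre relation
`E³F − (rs)⁻¹[3] E²FE + (rs)⁻¹[3] EFE² − FE³ = 0`, where `[3] = r² + rs + s²`. -/
theorem serre_relation_E (n : ℕ) (r s : ℂ) (hr : r ≠ 0) (hs : s ≠ 0) (hrs : r ≠ s) :
    Emat n r s ^ 3 * Fmat n r s
      - ((r * s)⁻¹ * (r ^ 2 + r * s + s ^ 2)) • (Emat n r s ^ 2 * Fmat n r s * Emat n r s)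
      + ((r * s)⁻¹ * (r ^ 2 + r * s + s ^ 2)) • (Emat n r s * Fmat n r s * Emat n r s ^ 2)
      - Fmat n r s * Emat n r s ^ 3 = 0 := by
  have h1 : Emat n r s ^ 3 * Fmat n r s
      = Emat n r s * (Emat n r s * (Emat n r s * Fmat n r s)) := by
    rw [pow_succ, pow_succ, pow_one]; noncomm_ring
  have h2 : Emat n r s ^ 2 * Fmat n r s * Emat n r s
      = Emat n r s * (Emat n r s * (Fmat n r s * Emat n r s)) := by
    rw [pow_two]; noncomm_ring
  have h3 : Emat n r s * Fmat n r s * Emat n r s ^ 2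
      = Emat n r s * (Fmat n r s * (Emat n r s * Emat n r s)) := by
    rw [pow_two]; noncomm_ring
  have h4 : Fmat n r s * Emat n r s ^ 3
      = Fmat n r s * (Emat n r s * (Emat n r s * Emat n r s)) := by
    rw [pow_succ, pow_succ, pow_one]; noncomm_ring
  rw [h1, h2, h3, h4]
  ext j i
  simp only [Matrix.sub_apply, Matrix.add_apply, Matrix.smul_apply, Matrix.zero_apply,
    smul_eq_mul, P1, P2, P3, P4]
  by_cases h : (j : ℕ) + 2 = (i : ℕ)
  · rw [if_pos h, if_pos h, if_pos h, if_pos h]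
    have hle : (j : ℕ) + 2 ≤ n := by omega
    obtain ⟨m, hm⟩ : ∃ m, n - (j : ℕ) - 2 = m := ⟨_, rfl⟩
    have e1 : n - (j : ℕ) - 1 = m + 1 := by omega
    have e3 : n + 1 - (j : ℕ) = m + 3 := by omega
    have e2 : n - (j : ℕ) = m + 2 := by omega
    rw [hm, e1, e3, e2]
    have hk := key r s hr hs hrs m (j : ℕ)
    linear_combination (qint r s (m + 2) * qint r s (m + 1)) * hk
  · rw [if_neg h, if_neg h, if_neg h, if_neg h]
    ring
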